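/- Let X be a strongly connected component of a deterministic tree automaton not replicated by any accepting loop, and let ρ be an accepting run. Then the subtree ρ_X of the run, consisting of nodes labeled by a state of X or having a descendant labeled by a state of X, has only finitely many branches. -/

import Mathlib

/-- One-step transition relation of a deterministic tree automaton. -/
def Step {Q A : Type*} (δ : Q → A → Fin 2 → Q) (p q : Q) : Prop := ∃ σ d, δ p σ d = q

/-- `ρ` is a run of the automaton `δ` on the input tree `t` (starting from an
arbitrary chosen state at the root). -/
def IsRun {Q A : Type*} (δ : Q → A → Fin 2 → Q) (t : List (Fin 2) → A)
    (ρ : List (Fin 2) → Q) : Prop :=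
  ∀ v d, ρ (v ++ [d]) = δ (ρ v) (t v) d

/-- The node at depth `n` on the branch `b` of the full binary tree. -/
def node2 (b : ℕ → Fin 2) (n : ℕ) : List (Fin 2) := List.ofFn fun i : Fin n => b i

/-- `r` occurs infinitely often in the sequence `f`. -/
def InfOcc (f : ℕ → ℕ) (r : ℕ) : Prop := ∀ m, ∃ n, m ≤ n ∧ f n = r

/-- The parity condition on one branch: the highest rank occurring infinitely
often is even. -/
def AcceptingBranch (f : ℕ → ℕ) : Prop :=
  ∃ r, Even r ∧ InfOcc f r ∧ ∀ r', InfOcc f r' → r' ≤ r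

/-- A run is accepting if every infinite branch satisfies the parity condition. -/
def Accepting {Q : Type*} (rank : Q → ℕ) (ρ : List (Fin 2) → Q) : Prop :=
  ∀ b : ℕ → Fin 2, AcceptingBranch fun n => rank (ρ (node2 b n))

/-- A state is productive if it occurs in some accepting run. -/
def Productive {Q A : Type*} (δ : Q → A → Fin 2 → Q) (rank : Q → ℕ) (p : Q) : Prop :=
  ∃ t ρ, IsRun δ t ρ ∧ Accepting rank ρ ∧ ∃ v, ρ v = p

/-- A loop (cycle) in the automaton, presented as an `m`-periodic sequence of
states connected by transitions. -/
def IsCycle {Q A : Type*} (δ : Q → A → Fin 2 → Q) (c : ℕ → Q) (m : ℕ) : Prop :=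
  0 < m ∧ (∀ n, c (n + m) = c n) ∧ ∀ n, Step δ (c n) (c (n + 1))

/-- The maximal rank on the loop `c` is even (the loop is accepting). -/
def MaxRankEven {Q : Type*} (rank : Q → ℕ) (c : ℕ → Q) : Prop :=
  ∃ r, Even r ∧ (∃ n, rank (c n) = r) ∧ ∀ n, rank (c n) ≤ r

/-- The maximal rank on the loop `c` is odd (the loop is rejecting). -/
def MaxRankOdd {Q : Type*} (rank : Q → ℕ) (c : ℕ → Q) : Prop :=
  ∃ r, Odd r ∧ (∃ n, rank (c n) = r) ∧ ∀ n, rank (c n) ≤ r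

/-- Reachability along transitions. -/
def Reaches {Q A : Type*} (δ : Q → A → Fin 2 → Q) : Q → Q → Prop :=
  Relation.ReflTransGen (Step δ)

/-- `p` is replicated by an accepting loop: there is an accepting loop `c`, whose
transition at `c 0` reads `σ` in direction `d₀`, and a path starting with the
transition on `(σ, d₁)`, `d₁ ≠ d₀`, leading from `c 0` to `p`. -/
def ReplicatedByAccLoop {Q A : Type*} (δ : Q → A → Fin 2 → Q) (rank : Q → ℕ)
    (p : Q) : Prop :=
  ∃ (c : ℕ → Q) (m : ℕ) (σ : A) (d₀ d₁ : Fin 2),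
    IsCycle δ c m ∧ MaxRankEven rank c ∧ δ (c 0) σ d₀ = c 1 ∧ d₀ ≠ d₁ ∧
      Reaches δ (δ (c 0) σ d₁) p

/-- `x` and `y` lie in the same strongly connected component: each reaches the
other. -/
def SameSCC {Q : Type*} (G : Q → Q → Prop) (x y : Q) : Prop :=
  Relation.ReflTransGen G x y ∧ Relation.ReflTransGen G y x

lemma node2_succ (b : ℕ → Fin 2) (n : ℕ) : node2 b (n+1) = node2 b n ++ [b n] := by
  simp only [node2, List.ofFn_succ', List.concat_eq_append, Fin.coe_castSucc, Fin.val_last]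

lemma node2_length (b : ℕ → Fin 2) (n : ℕ) : (node2 b n).length = n := by
  simp [node2]

lemma run_step {Q A : Type*} {δ : Q → A → Fin 2 → Q} {t ρ} (hrun : IsRun δ t ρ)
    (b : ℕ → Fin 2) (n : ℕ) :
    ρ (node2 b (n+1)) = δ (ρ (node2 b n)) (t (node2 b n)) (b n) := by
  rw [node2_succ]; exact hrun _ _

lemma run_reaches {Q A : Type*} {δ : Q → A → Fin 2 → Q} {t ρ} (hrun : IsRun δ t ρ)
    (v w : List (Fin 2)) : Reaches δ (ρ v) (ρ (v ++ w)) := by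
  induction w using List.reverseRecOn with
  | nil => rw [List.append_nil]; exact Relation.ReflTransGen.refl
  | append_singleton w d ih =>
    rw [← List.append_assoc]
    exact ih.tail ⟨t (v ++ w), d, (hrun (v ++ w) d).symm⟩

lemma koenig_step {S : Set (List (Fin 2))} {v : List (Fin 2)}
    (h : {w ∈ S | v <+: w}.Infinite) : ∃ d, {w ∈ S | v ++ [d] <+: w}.Infinite := by
  by_contra hc
  push_neg at hc
  have hsub : {w ∈ S | v <+: w} ⊆
      insert v ({w ∈ S | v ++ [0] <+: w} ∪ {w ∈ S | v ++ [1] <+: w}) := by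
    rintro w ⟨hw, s, rfl⟩
    match s with
    | [] => simp
    | d :: s' =>
      have hd : v ++ [d] <+: v ++ d :: s' := ⟨s', by simp⟩
      right
      fin_cases d
      · exact Or.inl ⟨hw, hd⟩
      · exact Or.inr ⟨hw, hd⟩
  exact h (((((hc 0).union (hc 1))).insert v).subset hsub)

open Classical in
noncomputable def knext (S : Set (List (Fin 2))) (v : List (Fin 2)) : Fin 2 :=
  if h : {w ∈ S | v <+: w}.Infinite then Classical.choose (koenig_step h) else 0

noncomputable def kpath (S : Set (List (Fin 2))) : ℕ → List (Fin 2)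
  | 0 => []
  | n+1 => kpath S n ++ [knext S (kpath S n)]

lemma knext_spec {S : Set (List (Fin 2))} {v : List (Fin 2)}
    (h : {w ∈ S | v <+: w}.Infinite) : {w ∈ S | v ++ [knext S v] <+: w}.Infinite := by
  rw [knext, dif_pos h]
  exact Classical.choose_spec (koenig_step h)

lemma koenig {S : Set (List (Fin 2))} (hS : S.Infinite) :
    ∃ b : ℕ → Fin 2, ∀ n, {w ∈ S | node2 b n <+: w}.Infinite := by
  refine ⟨fun n => knext S (kpath S n), ?_⟩
  have hnode : ∀ n, node2 (fun n => knext S (kpath S n)) n = kpath S n := by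
    intro n
    induction n with
    | zero => simp [node2, kpath]
    | succ n ih => rw [node2_succ, ih, kpath]
  intro n
  rw [hnode]
  induction n with
  | zero => simpa [kpath] using hS
  | succ n ih => rw [kpath]; exact knext_spec ih

lemma prefix_cases (b : ℕ → Fin 2) (w : List (Fin 2)) :
    ∀ m n, w.length ≤ m + n → node2 b n <+: w →
      w = node2 b w.length ∨ ∃ k d, n ≤ k ∧ d ≠ b k ∧ node2 b k ++ [d] <+: w := by
  intro m
  induction m with
  | zero =>
    intro n hlen hpre
    left
    have h1 : n ≤ w.length := by simpa [node2_length] using hpre.length_le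
    have h2 : w.length = n := by omega
    rw [h2]
    exact (hpre.eq_of_length (by rw [node2_length, h2])).symm
  | succ m ih =>
    intro n hlen hpre
    by_cases hn : w.length ≤ n
    · left
      have h1 : n ≤ w.length := by simpa [node2_length] using hpre.length_le
      have h2 : w.length = n := by omega
      rw [h2]
      exact (hpre.eq_of_length (by rw [node2_length, h2])).symm
    · obtain ⟨s, hs⟩ := hpre
      match s, hs with
      | [], hs =>
        exfalso; apply hn
        rw [← hs]; simp [node2_length]
      | d :: s', hs =>
        by_cases hd : d = b n
        · have hpre' : node2 b (n+1) <+: w := by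
            rw [node2_succ, ← hs, ← hd]
            exact ⟨s', by simp⟩
          rcases ih (n+1) (by omega) hpre' with h | ⟨k, d', hk, hd', hp⟩
          · exact Or.inl h
          · exact Or.inr ⟨k, d', by omega, hd', hp⟩
        · exact Or.inr ⟨n, d, le_refl n, hd, ⟨s', by rw [← hs]; simp⟩⟩

theorem br_finite {Q A : Type*} [Fintype Q] (δ : Q → A → Fin 2 → Q) (rank : Q → ℕ)
    (X : Set Q)
    (hnrep : ∀ p ∈ X, ¬ ReplicatedByAccLoop δ rank p)
    (t : List (Fin 2) → A) (ρ : List (Fin 2) → Q)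
    (hrun : IsRun δ t ρ) (hacc : Accepting rank ρ) :
    {v : List (Fin 2) | (∃ w, ρ ((v ++ [0]) ++ w) ∈ X) ∧
      (∃ w, ρ ((v ++ [1]) ++ w) ∈ X)}.Finite := by
  classical
  by_contra hinf
  obtain ⟨b, hb⟩ := koenig hinf
  -- branch-off property: infinitely often one can leave the branch towards X
  have hBO : ∀ n, ∃ k, n ≤ k ∧ ∃ d, d ≠ b k ∧ ∃ w, ρ ((node2 b k ++ [d]) ++ w) ∈ X := by
    intro n
    obtain ⟨v, hvBr, hpre⟩ := (hb n).nonempty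
    rcases prefix_cases b v v.length n (by omega) hpre with h | ⟨k, d, hk, hd, hp⟩
    · refine ⟨v.length, by simpa [node2_length] using hpre.length_le, ?_⟩
      by_cases h0 : b v.length = 0
      · exact ⟨1, by simp [h0], by rw [← h]; exact hvBr.2⟩
      · exact ⟨0, fun hc => h0 hc.symm, by rw [← h]; exact hvBr.1⟩
    · refine ⟨k, hk, d, hd, ?_⟩
      obtain ⟨s, hs⟩ := hp
      obtain ⟨w, hw⟩ := hvBr.1
      refine ⟨s ++ ([0] ++ w), ?_⟩
      rw [← List.append_assoc, hs, ← List.append_assoc]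
      exact hw
  obtain ⟨r, hrEven, hrInf, hrMax⟩ := hacc b
  set f : ℕ → ℕ := fun n => rank (ρ (node2 b n)) with hf
  -- eventually all ranks on the branch are ≤ r
  have hN : ∃ N, ∀ n, N ≤ n → f n ≤ r := by
    set Bad : Finset ℕ := (Finset.image rank Finset.univ).filter (fun x => r < x) with hBad
    have hbad : ∀ x ∈ Bad, ∃ m, ∀ n, m ≤ n → f n ≠ x := by
      intro x hx
      have hrx := (Finset.mem_filter.mp hx).2
      by_contra hcon
      push_neg at hcon
      have : InfOcc f x := fun m => hcon m
      exact absurd (hrMax x this) (by omega)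
    choose M hM using hbad
    refine ⟨Bad.attach.sup (fun x => M x.1 x.2), ?_⟩
    intro n hn
    by_contra hc
    push_neg at hc
    have hmem : f n ∈ Bad := Finset.mem_filter.mpr
      ⟨Finset.mem_image_of_mem rank (Finset.mem_univ _), hc⟩
    have hle : M (f n) hmem ≤ Bad.attach.sup (fun x => M x.1 x.2) :=
      Finset.le_sup (f := fun x : {x // x ∈ Bad} => M x.1 x.2)
        (Finset.mem_attach _ ⟨f n, hmem⟩)
    exact hM (f n) hmem n (by omega) rfl
  obtain ⟨N, hfN⟩ := hN
  choose gI hgI hgIr using hrInf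
  choose gK hgK hgKd using hBO
  set I : ℕ → ℕ := fun s => Nat.rec (gI (N+1)) (fun _ prev => gI (gK (prev+1) + 1)) s with hI
  have hIs : ∀ s, I (s+1) = gI (gK (I s + 1) + 1) := fun s => rfl
  have hfI : ∀ s, f (I s) = r := by
    intro s
    cases s with
    | zero => exact hgIr _
    | succ s => exact hgIr _
  have hImono : StrictMono I := by
    apply strictMono_nat_of_lt_succ
    intro s
    have h1 : I s + 1 ≤ gK (I s + 1) := hgK _
    have h2 : gK (I s + 1) + 1 ≤ I (s+1) := by rw [hIs]; exact hgI _
    omega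
  have hNI : ∀ s, N < I s := by
    intro s
    have h1 : N + 1 ≤ I 0 := hgI _
    have h2 : I 0 ≤ I s := hImono.monotone (Nat.zero_le s)
    omega
  obtain ⟨s, s', hss, heq⟩ :
      ∃ s s', s < s' ∧ ρ (node2 b (I s)) = ρ (node2 b (I s')) := by
    obtain ⟨x, y, hxy, h⟩ :=
      Finite.exists_ne_map_eq_of_infinite (fun s => ρ (node2 b (I s)))
    rcases hxy.lt_or_gt with h' | h'
    · exact ⟨x, y, h', h⟩
    · exact ⟨y, x, h', h.symm⟩
  set a := I s with ha
  set k := gK (I s + 1) with hk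
  set e := I s' with he
  have hak : a < k := by have := hgK (I s + 1); omega
  have hke : k < e := by
    have h2 : gK (I s + 1) + 1 ≤ I (s+1) := by rw [hIs]; exact hgI _
    have h3 : I (s+1) ≤ I s' := hImono.monotone hss
    omega
  have hNa : N < a := hNI s
  set m := e - a with hm
  have hm2 : 2 ≤ m := by omega
  have hqae : ρ (node2 b a) = ρ (node2 b e) := heq
  set c : ℕ → Q := fun n => ρ (node2 b (a + (n + (k - a)) % m)) with hc
  have hstep' : ∀ j, ρ (node2 b (a + (j+1) % m)) =
      δ (ρ (node2 b (a + j % m))) (t (node2 b (a + j % m))) (b (a + j % m)) := by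
    intro j
    have key : (j+1) % m = (j % m + 1) % m := by
      conv_lhs => rw [Nat.add_mod]
      rw [Nat.mod_eq_of_lt (show 1 < m by omega)]
    have hxm : j % m < m := Nat.mod_lt _ (by omega)
    by_cases hx : j % m + 1 = m
    · rw [key, hx, Nat.mod_self]
      calc ρ (node2 b (a + 0)) = ρ (node2 b e) := by rw [Nat.add_zero]; exact hqae
        _ = ρ (node2 b (a + j % m + 1)) := by
              rw [show a + j % m + 1 = e by omega]
        _ = δ (ρ (node2 b (a + j % m))) (t (node2 b (a + j % m))) (b (a + j % m)) :=
              run_step hrun b (a + j % m)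
    · rw [key, Nat.mod_eq_of_lt (by omega), show a + (j % m + 1) = (a + j % m) + 1 by omega]
      exact run_step hrun b (a + j % m)
  have hcyc : IsCycle δ c m := by
    refine ⟨by omega, ?_, ?_⟩
    · intro n
      simp only [hc]
      rw [show n + m + (k - a) = (n + (k - a)) + m by omega, Nat.add_mod_right]
    · intro n
      refine ⟨t (node2 b (a + (n + (k - a)) % m)), b (a + (n + (k - a)) % m), ?_⟩
      simp only [hc]
      rw [show n + 1 + (k - a) = (n + (k - a)) + 1 by omega]
      exact (hstep' (n + (k - a))).symm
  have hc0 : c 0 = ρ (node2 b k) := by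
    simp only [hc]
    rw [Nat.zero_add, Nat.mod_eq_of_lt (show k - a < m by omega),
      show a + (k - a) = k by omega]
  have hc1 : c 1 = ρ (node2 b (k+1)) := by
    simp only [hc]
    by_cases h : k - a + 1 < m
    · rw [show 1 + (k - a) = k - a + 1 by omega, Nat.mod_eq_of_lt h,
        show a + (k - a + 1) = k + 1 by omega]
    · rw [show 1 + (k - a) = m by omega, Nat.mod_self, Nat.add_zero,
        show k + 1 = e by omega]
      exact hqae
  have hmaxr : MaxRankEven rank c := by
    refine ⟨r, hrEven, ⟨m - (k - a), ?_⟩, ?_⟩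
    · simp only [hc]
      rw [show m - (k - a) + (k - a) = m by omega, Nat.mod_self, Nat.add_zero]
      exact hfI s
    · intro n
      have hlt : (n + (k - a)) % m < m := Nat.mod_lt _ (by omega)
      have hge : N ≤ a + (n + (k - a)) % m := le_trans (by omega) (Nat.le_add_right a _)
      exact hfN _ hge
  obtain ⟨d, hd, w, hpX⟩ := hgKd (I s + 1)
  apply hnrep _ hpX
  refine ⟨c, m, t (node2 b k), b k, d, hcyc, hmaxr, ?_, fun hcon => hd hcon.symm, ?_⟩
  · rw [hc0, hc1]
    exact (run_step hrun b k).symm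
  · rw [hc0, ← hrun (node2 b k) d]
    exact run_reaches hrun (node2 b k ++ [d]) w

lemma list_div {α : Type*} : ∀ (v v₂ : List α), ¬ v <+: v₂ → ¬ v₂ <+: v →
    ∃ u d d₂, d ≠ d₂ ∧ u ++ [d] <+: v ∧ u ++ [d₂] <+: v₂ := by
  intro v
  induction v with
  | nil => intro v₂ h _; exact absurd List.nil_prefix h
  | cons x v ih =>
    intro v₂ h h₂
    match v₂ with
    | [] => exact absurd List.nil_prefix h₂
    | y :: v₂' =>
      by_cases hxy : x = y
      · subst hxy
        have h' : ¬ v <+: v₂' := fun hc => h (List.cons_prefix_cons.mpr ⟨rfl, hc⟩)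
        have h₂' : ¬ v₂' <+: v := fun hc => h₂ (List.cons_prefix_cons.mpr ⟨rfl, hc⟩)
        obtain ⟨u, d, d₂, hne, hp, hp₂⟩ := ih v₂' h' h₂'
        exact ⟨x :: u, d, d₂, hne, List.cons_prefix_cons.mpr ⟨rfl, hp⟩,
          List.cons_prefix_cons.mpr ⟨rfl, hp₂⟩⟩
      · exact ⟨[], x, y, hxy, List.cons_prefix_cons.mpr ⟨rfl, List.nil_prefix⟩,
          List.cons_prefix_cons.mpr ⟨rfl, List.nil_prefix⟩⟩

/-- Specification of the "tag" of a maximal chain: either no branching node with a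
child in the chain exists, or the tag is a greatest such branching node together
with the direction the chain takes there. -/
def TagSpec (Br PV : Set (List (Fin 2))) : Option (↥Br × Fin 2) → Prop
  | none => ∀ u d, ¬(u ∈ Br ∧ u ++ [d] ∈ PV)
  | some (u, d) => u.1 ++ [d] ∈ PV ∧ ∀ w e, w ∈ Br → w ++ [e] ∈ PV → w <+: u.1

/-- If `X` is a strongly connected component of the automaton, no state of which
is replicated by an accepting loop, and `ρ` is an accepting run, then the
subtree `ρ_X` of nodes having a descendant (or themselves) labeled by a state of
`X` has only finitely many branches (maximal chains under the prefix order). -/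
theorem rhoX_finitely_many_branches {Q A : Type*} [Fintype Q]
    (δ : Q → A → Fin 2 → Q) (rank : Q → ℕ)
    (X : Set Q) (hX : ∃ q₀, X = {x | SameSCC (Step δ) x q₀})
    (hnrep : ∀ p ∈ X, ¬ ReplicatedByAccLoop δ rank p)
    (t : List (Fin 2) → A) (ρ : List (Fin 2) → Q)
    (hrun : IsRun δ t ρ) (hacc : Accepting rank ρ) :
    {P : Set {v : List (Fin 2) // ∃ w, ρ (v ++ w) ∈ X} |
      IsMaxChain (fun a b => a.1 <+: b.1) P}.Finite := by
  classical
  set Br : Set (List (Fin 2)) :=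
    {v | (∃ w, ρ ((v ++ [0]) ++ w) ∈ X) ∧ (∃ w, ρ ((v ++ [1]) ++ w) ∈ X)} with hBrdef
  have hBr : Br.Finite := br_finite δ rank X hnrep t ρ hrun hacc
  set T := {v : List (Fin 2) // ∃ w, ρ (v ++ w) ∈ X} with hT
  set rel : T → T → Prop := fun a b => a.1 <+: b.1 with hrel
  -- chains of lists obtained from chains in the subtype
  have hchainPV : ∀ P : Set T, IsChain rel P →
      IsChain (· <+: ·) (Subtype.val '' P) := by
    rintro P hP x ⟨a, ha, rfl⟩ y ⟨c, hc, rfl⟩ hne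
    exact hP ha hc (fun h => hne (by rw [h]))
  -- maximal chains are downward closed
  have hdc : ∀ (P : Set T), IsMaxChain rel P → ∀ v ∈ P, ∀ u : T, u.1 <+: v.1 → u ∈ P := by
    intro P hP v hv u hu
    by_cases hmem : u ∈ P
    · exact hmem
    have hchain : IsChain rel (insert u P) := by
      apply hP.1.insert
      intro x hx hnex
      by_cases hxv : x = v
      · subst hxv; exact Or.inl hu
      · rcases hP.1 hx hv hxv with h | h
        · exact (List.prefix_or_prefix_of_prefix h hu).symm
        · exact Or.inl (hu.trans h)
    have := hP.2 hchain (Set.subset_insert _ _)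
    rw [this]
    exact Set.mem_insert _ _
  -- comparable elements of a chain with smaller length are prefixes
  have hcmp : ∀ (P : Set T), IsChain rel P → ∀ (x y : List (Fin 2)),
      x ∈ Subtype.val '' P → y ∈ Subtype.val '' P → x.length ≤ y.length → x <+: y := by
    intro P hP x y hx hy hlen
    by_cases hxy : x = y
    · exact hxy ▸ List.prefix_refl x
    · rcases hchainPV P hP hx hy hxy with h | h
      · exact h
      · exact absurd (h.eq_of_length (le_antisymm h.length_le hlen)).symm hxy
  -- existence of tags
  have exists_tag : ∀ P : Set T, IsMaxChain rel P →
      ∃ o, TagSpec Br (Subtype.val '' P) o := by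
    intro P hP
    set BP : Set (List (Fin 2)) :=
      {u | u ∈ Br ∧ ∃ d, u ++ [d] ∈ Subtype.val '' P} with hBP
    by_cases hne : BP.Nonempty
    · have hBPfin : BP.Finite := hBr.subset (fun u hu => hu.1)
      obtain ⟨u, huBP, humax⟩ :=
        Set.Finite.exists_maximalFor List.length BP hBPfin hne
      have hgreat : ∀ w ∈ BP, w <+: u := by
        intro w hw
        obtain ⟨du, hdu⟩ := huBP.2
        obtain ⟨dw, hdw⟩ := hw.2
        by_cases heq : u ++ [du] = w ++ [dw]
        · have hueq : u = w := (List.append_inj' heq rfl).1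
          exact hueq ▸ List.prefix_refl w
        · rcases hchainPV P hP.1 hdu hdw heq with h | h
          · rcases List.prefix_concat_iff.mp h with heq2 | hpre
            · exact absurd heq2 heq
            · exfalso
              have h2 : u.length + 1 ≤ w.length := by simpa using hpre.length_le
              have := humax hw (by omega)
              omega
          · rcases List.prefix_concat_iff.mp h with heq2 | hpre
            · exact absurd heq2.symm heq
            · exact (List.prefix_append w [dw]).trans hpre
      obtain ⟨du, hdu⟩ := huBP.2
      exact ⟨some (⟨u, huBP.1⟩, du), hdu,
        fun w e hwBr hwP => hgreat w ⟨hwBr, e, hwP⟩⟩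
    · exact ⟨none, fun u d h => hne ⟨u, h.1, d, h.2⟩⟩
  -- put everything together: tags are injective
  haveI := hBr.to_subtype
  haveI : Finite (Option (↥Br × Fin 2)) :=
    Finite.of_equiv _ (Equiv.optionEquivSumPUnit.{0,0} (↥Br × Fin 2)).symm
  rw [← Set.finite_coe_iff]
  choose tag htag using
    fun P : {P : Set T // IsMaxChain rel P} => exists_tag P.1 P.2
  apply Finite.of_injective tag
  intro P₁ P₂ htageq
  by_contra hne12
  have hsetne : P₁.1 ≠ P₂.1 := fun h => hne12 (Subtype.ext h)
  have hnsub : ¬ P₁.1 ⊆ P₂.1 := fun h => hsetne (P₁.2.2 P₂.2.1 h)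
  have hnsub' : ¬ P₂.1 ⊆ P₁.1 := fun h => hsetne ((P₂.2.2 P₁.2.1 h).symm)
  obtain ⟨v, hv1, hv2⟩ := Set.not_subset.mp hnsub
  obtain ⟨v₂, hv₂2, hv₂1⟩ := Set.not_subset.mp hnsub'
  have hic : ¬ v.1 <+: v₂.1 := fun h => hv2 (hdc P₂.1 P₂.2 v₂ hv₂2 v h)
  have hic₂ : ¬ v₂.1 <+: v.1 := fun h => hv₂1 (hdc P₁.1 P₁.2 v hv1 v₂ h)
  obtain ⟨u, d, d₂, hdd, hp, hp₂⟩ := list_div v.1 v₂.1 hic hic₂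
  have hDpre : ∀ (x y : List (Fin 2)), x <+: y →
      (∃ w, ρ (y ++ w) ∈ X) → (∃ w, ρ (x ++ w) ∈ X) := by
    rintro x y ⟨s, rfl⟩ ⟨w, hw⟩
    exact ⟨s ++ w, by rwa [← List.append_assoc]⟩
  have hud : ∃ w, ρ ((u ++ [d]) ++ w) ∈ X := hDpre _ _ hp v.2
  have hud₂ : ∃ w, ρ ((u ++ [d₂]) ++ w) ∈ X := hDpre _ _ hp₂ v₂.2
  have hcover : ∀ e : Fin 2, e = d ∨ e = d₂ := by
    intro e
    have h1 := d.isLt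
    have h2 := d₂.isLt
    have h3 := e.isLt
    have hne' : d.val ≠ d₂.val := fun h => hdd (Fin.ext h)
    rw [Fin.ext_iff, Fin.ext_iff]
    omega
  have huBr : u ∈ Br := by
    constructor
    · rcases hcover 0 with h | h
      · rw [h]; exact hud
      · rw [h]; exact hud₂
    · rcases hcover 1 with h | h
      · rw [h]; exact hud
      · rw [h]; exact hud₂
  have hudP : (u ++ [d]) ∈ Subtype.val '' P₁.1 :=
    ⟨⟨u ++ [d], hud⟩, hdc P₁.1 P₁.2 v hv1 ⟨u ++ [d], hud⟩ hp, rfl⟩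
  have hud₂P : (u ++ [d₂]) ∈ Subtype.val '' P₂.1 :=
    ⟨⟨u ++ [d₂], hud₂⟩, hdc P₂.1 P₂.2 v₂ hv₂2 ⟨u ++ [d₂], hud₂⟩ hp₂, rfl⟩
  have h1 := htag P₁
  have h2 := htag P₂
  rw [← htageq] at h2
  cases hot : tag P₁ with
  | none =>
    rw [hot] at h1
    exact h1 u d ⟨huBr, hudP⟩
  | some ue =>
    obtain ⟨ustar, estar⟩ := ue
    rw [hot] at h1 h2
    obtain ⟨hm1, hg1⟩ := h1
    obtain ⟨hm2, hg2⟩ := h2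
    have hu1 : u <+: ustar.1 := hg1 u d huBr hudP
    have hch1 : u ++ [d] <+: ustar.1 ++ [estar] :=
      hcmp P₁.1 P₁.2.1 _ _ hudP hm1 (by simpa using Nat.succ_le_succ hu1.length_le)
    have hch2 : u ++ [d₂] <+: ustar.1 ++ [estar] :=
      hcmp P₂.1 P₂.2.1 _ _ hud₂P hm2 (by simpa using Nat.succ_le_succ hu1.length_le)
    have heq12 : u ++ [d] = u ++ [d₂] := by
      rcases List.prefix_or_prefix_of_prefix hch1 hch2 with h | h
      · exact h.eq_of_length (by simp)
      · exact (h.eq_of_length (by simp)).symm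
    exact hdd (by simpa using heq12)
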